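/- As α → 0⁺, the MDYPL estimator β̂(α) (the unique maximizer of ℓ(β; y*, X) with y*_j = α y_j + (1−α)/2) converges to 0, the prior mode; and if the ML estimate β̂^{ML} exists (is finite), then β̂(α) → β̂^{ML} as α → 1⁻. -/

import Mathlib

noncomputable def zeta (x : ℝ) : ℝ := Real.log (1 + Real.exp x)

lemma one_add_exp_pos (x : ℝ) : (0:ℝ) < 1 + Real.exp x := by positivity

lemma zeta_nonneg (x : ℝ) : 0 ≤ zeta x := Real.log_nonneg (by nlinarith [Real.exp_pos x])

lemma le_zeta (x : ℝ) : x ≤ zeta x := by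
  have := Real.log_le_log (Real.exp_pos x) (by nlinarith [Real.exp_pos x] : Real.exp x ≤ 1 + Real.exp x)
  simpa [Real.log_exp, zeta] using this

lemma half_term_le (x : ℝ) : x / 2 - zeta x ≤ -(|x| / 2) := by
  rcases le_or_gt 0 x with h | h
  · have := le_zeta x
    rw [abs_of_nonneg h]; linarith
  · have := zeta_nonneg x
    rw [abs_of_neg h]; linarith

lemma two_exp_half (s t : ℝ) (h : s ≠ t) :
    2 * Real.exp ((s + t) / 2) < Real.exp s + Real.exp t := by
  have ha : Real.exp ((s+t)/2) = Real.exp (s/2) * Real.exp (t/2) := by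
    rw [← Real.exp_add]; ring_nf
  have hs : Real.exp s = Real.exp (s/2) ^ 2 := by
    rw [sq, ← Real.exp_add]; ring_nf
  have ht : Real.exp t = Real.exp (t/2) ^ 2 := by
    rw [sq, ← Real.exp_add]; ring_nf
  have hne : Real.exp (s/2) ≠ Real.exp (t/2) := by
    intro hc; exact h (by have := Real.exp_injective hc; linarith)
  have hd : (0:ℝ) < (Real.exp (s/2) - Real.exp (t/2))^2 := by
    have : Real.exp (s/2) - Real.exp (t/2) ≠ 0 := sub_ne_zero.mpr hne
    positivity
  rw [ha, hs, ht]; nlinarith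

lemma zeta_midpoint_le (s t : ℝ) : 2 * zeta ((s + t) / 2) ≤ zeta s + zeta t := by
  have h1 : (1 + Real.exp ((s+t)/2))^2 ≤ (1 + Real.exp s) * (1 + Real.exp t) := by
    have ha : Real.exp ((s+t)/2) = Real.exp (s/2) * Real.exp (t/2) := by
      rw [← Real.exp_add]; ring_nf
    have hs : Real.exp s = Real.exp (s/2) ^ 2 := by rw [sq, ← Real.exp_add]; ring_nf
    have ht : Real.exp t = Real.exp (t/2) ^ 2 := by rw [sq, ← Real.exp_add]; ring_nf
    rw [ha, hs, ht]; nlinarith [sq_nonneg (Real.exp (s/2) - Real.exp (t/2))]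
  have h2 := Real.log_le_log (by positivity) h1
  rw [Real.log_pow, Real.log_mul (by positivity) (by positivity)] at h2
  simpa [zeta] using h2

lemma zeta_midpoint_lt {s t : ℝ} (h : s ≠ t) : 2 * zeta ((s + t) / 2) < zeta s + zeta t := by
  have h1 : (1 + Real.exp ((s+t)/2))^2 < (1 + Real.exp s) * (1 + Real.exp t) := by
    have h0 := two_exp_half s t h
    have hm : Real.exp ((s+t)/2)^2 = Real.exp s * Real.exp t := by
      rw [sq, ← Real.exp_add, ← Real.exp_add]; ring_nf
    nlinarith [Real.exp_pos ((s+t)/2)]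
  have h2 := Real.log_lt_log (by positivity) h1
  rw [Real.log_pow, Real.log_mul (by positivity) (by positivity)] at h2
  simpa [zeta] using h2

noncomputable def loglik {n p : ℕ} (y : Fin n → ℝ) (X : Fin n → Fin p → ℝ)
    (β : Fin p → ℝ) : ℝ :=
  ∑ j, (y j * (∑ i, X j i * β i) - zeta (∑ i, X j i * β i))

lemma sum_midpoint {n p : ℕ} (X : Fin n → Fin p → ℝ) (b b' : Fin p → ℝ) (j : Fin n) :
    (∑ i, X j i * ((b i + b' i) / 2)) =
      ((∑ i, X j i * b i) + ∑ i, X j i * b' i) / 2 := by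
  rw [eq_div_iff (by norm_num : (2:ℝ) ≠ 0), Finset.sum_mul, ← Finset.sum_add_distrib]
  exact Finset.sum_congr rfl fun i _ => by ring

lemma maxOn_unique {n p : ℕ} (y' : Fin n → ℝ) (X : Fin n → Fin p → ℝ)
    (hX : Function.Injective fun β : Fin p → ℝ => fun j => ∑ i, X j i * β i)
    {b b' : Fin p → ℝ} (hb : IsMaxOn (loglik y' X) Set.univ b)
    (hb' : IsMaxOn (loglik y' X) Set.univ b') : b = b' := by
  by_contra hne
  set t : Fin n → ℝ := fun j => ∑ i, X j i * b i with htdef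
  set t' : Fin n → ℝ := fun j => ∑ i, X j i * b' i with ht'def
  have htne : t ≠ t' := fun hc => hne (hX hc)
  obtain ⟨j0, hj0⟩ := Function.ne_iff.mp htne
  have heq : loglik y' X b = loglik y' X b' :=
    le_antisymm (isMaxOn_iff.mp hb' b (Set.mem_univ b)) (isMaxOn_iff.mp hb b' (Set.mem_univ b'))
  set m : Fin p → ℝ := fun i => (b i + b' i) / 2 with hmdef
  have hmlt : loglik y' X b < loglik y' X m := by
    have key : ∀ j : Fin n,
        (y' j * t j - zeta (t j) + (y' j * t' j - zeta (t' j))) / 2 ≤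
          y' j * (∑ i, X j i * m i) - zeta (∑ i, X j i * m i) := by
      intro j
      rw [hmdef, sum_midpoint X b b' j]
      have h := zeta_midpoint_le (t j) (t' j)
      have e1 : t j = ∑ i, X j i * b i := rfl
      have e2 : t' j = ∑ i, X j i * b' i := rfl
      rw [← e1, ← e2]
      linarith
    have keystrict :
        (y' j0 * t j0 - zeta (t j0) + (y' j0 * t' j0 - zeta (t' j0))) / 2 <
          y' j0 * (∑ i, X j0 i * m i) - zeta (∑ i, X j0 i * m i) := by
      rw [hmdef, sum_midpoint X b b' j0]
      have h := zeta_midpoint_lt hj0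
      have e1 : t j0 = ∑ i, X j0 i * b i := rfl
      have e2 : t' j0 = ∑ i, X j0 i * b' i := rfl
      rw [← e1, ← e2]
      linarith
    have hsum : ∑ j, (y' j * t j - zeta (t j) + (y' j * t' j - zeta (t' j))) / 2 <
        ∑ j, (y' j * (∑ i, X j i * m i) - zeta (∑ i, X j i * m i)) :=
      Finset.sum_lt_sum (fun j _ => key j) ⟨j0, Finset.mem_univ j0, keystrict⟩
    have hlhs : ∑ j, (y' j * t j - zeta (t j) + (y' j * t' j - zeta (t' j))) / 2 =
        (loglik y' X b + loglik y' X b') / 2 := by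
      rw [loglik, loglik, ← Finset.sum_add_distrib, Finset.sum_div]
    rw [hlhs, ← heq] at hsum
    calc loglik y' X b = (loglik y' X b + loglik y' X b) / 2 := by ring
    _ < loglik y' X m := hsum
  exact absurd (isMaxOn_iff.mp hb m (Set.mem_univ m)) (not_le.mpr hmlt)

lemma zeta_continuous : Continuous zeta :=
  (continuous_const.add Real.continuous_exp).log fun x => ne_of_gt (one_add_exp_pos x)

lemma loglik_continuous {n p : ℕ} (y' : Fin n → ℝ) (X : Fin n → Fin p → ℝ) :
    Continuous (loglik y' X) := by
  apply continuous_finset_sum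
  intro j _
  have ht : Continuous fun β : Fin p → ℝ => ∑ i, X j i * β i :=
    continuous_finset_sum _ fun i _ => continuous_const.mul (continuous_apply i)
  exact (continuous_const.mul ht).sub (zeta_continuous.comp ht)

lemma tendsto_of_maxish {p : ℕ} {f : (Fin p → ℝ) → ℝ} (hf : Continuous f)
    {b : Fin p → ℝ} (hmax : IsMaxOn f Set.univ b)
    (huniq : ∀ b', IsMaxOn f Set.univ b' → b' = b)
    {l : Filter ℝ} [l.NeBot] {g : ℝ → Fin p → ℝ} {R : ℝ}
    (hbound : ∀ᶠ α in l, ‖g α‖ ≤ R)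
    (hval : Filter.Tendsto (fun α => f (g α)) l (nhds (f b))) :
    Filter.Tendsto g l (nhds b) := by
  rw [Metric.tendsto_nhds]
  intro ε hε
  set K := Metric.closedBall (0 : Fin p → ℝ) R \ Metric.ball b ε with hK
  have hKc : IsCompact K := (isCompact_closedBall _ _).diff Metric.isOpen_ball
  by_cases hne : K.Nonempty
  · obtain ⟨x₀, hx₀K, hx₀max⟩ := hKc.exists_isMaxOn hne hf.continuousOn
    have hx₀ne : x₀ ≠ b := by
      intro hc
      have : x₀ ∈ Metric.ball b ε := by
        rw [hc]; exact Metric.mem_ball_self hε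
      exact hx₀K.2 this
    have hx₀lt : f x₀ < f b := by
      rcases lt_or_eq_of_le (isMaxOn_iff.mp hmax x₀ (Set.mem_univ x₀)) with h | h
      · exact h
      · exfalso
        apply hx₀ne
        apply huniq
        rw [isMaxOn_iff]
        intro z hz
        rw [h]
        exact isMaxOn_iff.mp hmax z hz
    have hev : ∀ᶠ α in l, f x₀ < f (g α) :=
      hval.eventually (eventually_gt_nhds hx₀lt)
    filter_upwards [hbound, hev] with α h1 h2
    by_contra hc
    push_neg at hc
    have hmem : g α ∈ K := by
      constructor
      · rwa [Metric.mem_closedBall, dist_zero_right]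
      · rw [Metric.mem_ball]; push_neg; exact hc
    exact absurd (isMaxOn_iff.mp hx₀max (g α) hmem) (not_le.mpr h2)
  · filter_upwards [hbound] with α h1
    by_contra hc
    push_neg at hc
    exact hne ⟨g α, by rwa [Metric.mem_closedBall, dist_zero_right], by
      rw [Metric.mem_ball]; push_neg; exact hc⟩

lemma zeta_zero : zeta 0 = Real.log 2 := by
  simp [zeta, Real.exp_zero]; norm_num

lemma loglik_zero {n p : ℕ} (y' : Fin n → ℝ) (X : Fin n → Fin p → ℝ) :
    loglik y' X 0 = -(n * Real.log 2) := by
  simp [loglik, zeta_zero]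

lemma loglik_decomp {n p : ℕ} (y : Fin n → ℝ) (X : Fin n → Fin p → ℝ) (α : ℝ)
    (β : Fin p → ℝ) :
    loglik (fun j => α * y j + (1 - α) / 2) X β =
      α * loglik y X β + (1 - α) * loglik (fun _ => (1:ℝ)/2) X β := by
  rw [loglik, loglik, loglik, Finset.mul_sum, Finset.mul_sum, ← Finset.sum_add_distrib]
  exact Finset.sum_congr rfl fun j _ => by ring

lemma half_term_le_neg_log2 (x : ℝ) : x / 2 - zeta x ≤ -Real.log 2 := by
  have h1 : 2 * Real.exp (x/2) ≤ 1 + Real.exp x := by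
    have hs : Real.exp x = Real.exp (x/2) ^ 2 := by rw [sq, ← Real.exp_add]; ring_nf
    nlinarith [sq_nonneg (Real.exp (x/2) - 1)]
  have h2 := Real.log_le_log (by positivity) h1
  rw [Real.log_mul (by norm_num) (ne_of_gt (Real.exp_pos _)), Real.log_exp] at h2
  simp only [zeta]
  linarith

lemma halfloglik_max {n p : ℕ} (X : Fin n → Fin p → ℝ) :
    IsMaxOn (loglik (fun _ => (1:ℝ)/2) X) Set.univ 0 := by
  rw [isMaxOn_iff]
  intro β _
  rw [loglik_zero]
  calc loglik (fun _ => (1:ℝ)/2) X β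
      ≤ ∑ _j : Fin n, -Real.log 2 := by
        apply Finset.sum_le_sum
        intro j _
        have := half_term_le_neg_log2 (∑ i, X j i * β i)
        linarith
    _ = -(n * Real.log 2) := by simp [Finset.sum_const]

lemma yterm_nonpos {c x : ℝ} (hc : c = 0 ∨ c = 1) : c * x - zeta x ≤ 0 := by
  rcases hc with h | h <;> subst h
  · simpa using zeta_nonneg x
  · have := le_zeta x; linarith

lemma yloglik_nonpos {n p : ℕ} {y : Fin n → ℝ} (hy : ∀ j, y j = 0 ∨ y j = 1)
    (X : Fin n → Fin p → ℝ) (β : Fin p → ℝ) : loglik y X β ≤ 0 := by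
  apply Finset.sum_nonpos
  intro j _
  exact yterm_nonpos (hy j)

lemma coord_bound {n p : ℕ} (X : Fin n → Fin p → ℝ) (β : Fin p → ℝ) {C : ℝ}
    (h : -C ≤ loglik (fun _ => (1:ℝ)/2) X β) (j : Fin n) :
    |∑ i, X j i * β i| ≤ 2 * C := by
  set f : Fin n → ℝ := fun j => (1:ℝ)/2 * (∑ i, X j i * β i) - zeta (∑ i, X j i * β i) with hf
  have hnp : ∀ k ∈ Finset.univ, 0 ≤ -f k := by
    intro k _
    have h1 := half_term_le (∑ i, X k i * β i)
    have h2 : (0:ℝ) ≤ |∑ i, X k i * β i| := abs_nonneg _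
    simp only [hf]
    linarith
  have hsingle := Finset.single_le_sum hnp (Finset.mem_univ j)
  have hsum : ∑ k, -f k = -loglik (fun _ => (1:ℝ)/2) X β := by
    rw [loglik, ← Finset.sum_neg_distrib]
  rw [hsum] at hsingle
  have h1 := half_term_le (∑ i, X j i * β i)
  simp only [hf] at hsingle
  linarith

theorem stmt_15 {n p : ℕ} (y : Fin n → ℝ) (hy : ∀ j, y j = 0 ∨ y j = 1)
    (X : Fin n → Fin p → ℝ)
    (hX : Function.Injective fun β : Fin p → ℝ => fun j => ∑ i, X j i * β i)
    (bhat : ℝ → Fin p → ℝ)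
    (hbhat : ∀ α ∈ Set.Ioo (0 : ℝ) 1,
      IsMaxOn (loglik (fun j => α * y j + (1 - α) / 2) X) Set.univ (bhat α)) :
    Filter.Tendsto bhat (nhdsWithin 0 (Set.Ioo (0 : ℝ) 1)) (nhds 0) ∧
    ∀ bML : Fin p → ℝ, IsMaxOn (loglik y X) Set.univ bML →
      Filter.Tendsto bhat (nhdsWithin 1 (Set.Ioo (0 : ℝ) 1)) (nhds bML) := by
  classical
  set ℓy := loglik y X with hℓy
  set ℓh := loglik (fun _ => (1:ℝ)/2) X with hℓh
  set c := (n : ℝ) * Real.log 2 with hc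
  have hc0 : 0 ≤ c := by
    have := Real.log_nonneg (by norm_num : (1:ℝ) ≤ 2)
    positivity
  -- linear map and continuous left inverse
  let L : (Fin p → ℝ) →ₗ[ℝ] (Fin n → ℝ) :=
    { toFun := fun β => fun j => ∑ i, X j i * β i
      map_add' := by
        intro a b; funext j
        simp [mul_add, Finset.sum_add_distrib]
      map_smul' := by
        intro cc a; funext j
        simp only [RingHom.id_apply, Pi.smul_apply, smul_eq_mul, Finset.mul_sum]
        exact Finset.sum_congr rfl fun i _ => by ring }
  have hLinj : Function.Injective L := hX
  obtain ⟨G, hG⟩ := L.exists_leftInverse_of_injective (LinearMap.ker_eq_bot.mpr hLinj)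
  let G' := LinearMap.toContinuousLinearMap G
  have hGL : ∀ β : Fin p → ℝ, G' (L β) = β := by
    intro β
    have := LinearMap.congr_fun hG β
    show G (L β) = β
    simpa using this
  have hnormbound : ∀ (β : Fin p → ℝ) (M : ℝ), 0 ≤ M →
      (∀ j, |∑ i, X j i * β i| ≤ M) → ‖β‖ ≤ ‖G'‖ * M := by
    intro β M hM hcoord
    have hLnorm : ‖L β‖ ≤ M := by
      rw [pi_norm_le_iff_of_nonneg hM]
      intro j
      rw [Real.norm_eq_abs]
      exact hcoord j
    calc ‖β‖ = ‖G' (L β)‖ := by rw [hGL]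
      _ ≤ ‖G'‖ * ‖L β‖ := G'.le_opNorm _
      _ ≤ ‖G'‖ * M := by
          have := norm_nonneg G'
          nlinarith
  have hℓh0 : ℓh 0 = -c := loglik_zero _ X
  have hℓy0 : ℓy 0 = -c := loglik_zero _ X
  constructor
  · -- Part 1 : α → 0⁺
    haveI : (nhdsWithin (0:ℝ) (Set.Ioo 0 1)).NeBot := by
      apply mem_closure_iff_nhdsWithin_neBot.mp
      rw [closure_Ioo (by norm_num : (0:ℝ) ≠ 1)]
      exact Set.left_mem_Icc.mpr (by norm_num)
    have hsmall : ∀ᶠ α in nhdsWithin (0:ℝ) (Set.Ioo 0 1), α ≤ 1/2 :=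
      Filter.Eventually.filter_mono nhdsWithin_le_nhds
        ((eventually_lt_nhds (by norm_num : (0:ℝ) < 1/2)).mono fun α h => le_of_lt h)
    have hmem : ∀ᶠ α in nhdsWithin (0:ℝ) (Set.Ioo 0 1), α ∈ Set.Ioo (0:ℝ) 1 :=
      eventually_mem_nhdsWithin
    -- key lower bound
    have hlow : ∀ α ∈ Set.Ioo (0:ℝ) 1, α ≤ 1/2 → -c - 2*c*α ≤ ℓh (bhat α) := by
      intro α hα hα2
      have h0 := isMaxOn_iff.mp (hbhat α hα) 0 (Set.mem_univ 0)
      rw [loglik_decomp y X α 0, loglik_decomp y X α (bhat α)] at h0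
      rw [← hℓy, ← hℓh] at h0
      rw [hℓy0, hℓh0] at h0
      have hA := yloglik_nonpos hy X (bhat α)
      rw [← hℓy] at hA
      nlinarith [hα.1, hα.2, mul_nonneg (le_of_lt hα.1) hc0]
    have hup : ∀ β, ℓh β ≤ -c := by
      intro β
      have h := isMaxOn_iff.mp (halfloglik_max X) β (Set.mem_univ β)
      rw [loglik_zero _ X] at h
      exact h
    have hbound : ∀ᶠ α in nhdsWithin (0:ℝ) (Set.Ioo 0 1), ‖bhat α‖ ≤ ‖G'‖ * (4*c) := by
      filter_upwards [hmem, hsmall] with α hα hα2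
      apply hnormbound _ _ (by positivity)
      intro j
      have h1 := hlow α hα hα2
      have h2 : -(2*c) ≤ ℓh (bhat α) := by nlinarith
      have := coord_bound X (bhat α) (by rw [← hℓh]; exact h2) j
      linarith
    have hval : Filter.Tendsto (fun α => ℓh (bhat α)) (nhdsWithin (0:ℝ) (Set.Ioo 0 1))
        (nhds (ℓh 0)) := by
      rw [hℓh0]
      apply tendsto_of_tendsto_of_tendsto_of_le_of_le'
        (g := fun α : ℝ => -c - 2*c*α) (h := fun _ : ℝ => -c)
      · have h : Filter.Tendsto (fun α : ℝ => -c - 2*c*α) (nhds 0) (nhds (-c)) :=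
          (continuous_const.sub (continuous_const.mul continuous_id)).tendsto' 0 (-c) (by simp)
        exact h.mono_left nhdsWithin_le_nhds
      · exact tendsto_const_nhds
      · filter_upwards [hmem, hsmall] with α hα hα2
        exact hlow α hα hα2
      · filter_upwards with α
        exact hup _
    exact tendsto_of_maxish (loglik_continuous _ X) (halfloglik_max X)
      (fun b' h => maxOn_unique _ X hX h (halfloglik_max X)) hbound hval
  · -- Part 2 : α → 1⁻
    intro bML hbML
    haveI : (nhdsWithin (1:ℝ) (Set.Ioo 0 1)).NeBot := by
      apply mem_closure_iff_nhdsWithin_neBot.mp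
      rw [closure_Ioo (by norm_num : (0:ℝ) ≠ 1)]
      exact Set.right_mem_Icc.mpr (by norm_num)
    have hbig : ∀ᶠ α in nhdsWithin (1:ℝ) (Set.Ioo 0 1), (1:ℝ)/2 ≤ α :=
      Filter.Eventually.filter_mono nhdsWithin_le_nhds
        ((eventually_gt_nhds (by norm_num : (1:ℝ)/2 < 1)).mono fun α h => le_of_lt h)
    have hmem : ∀ᶠ α in nhdsWithin (1:ℝ) (Set.Ioo 0 1), α ∈ Set.Ioo (0:ℝ) 1 :=
      eventually_mem_nhdsWithin
    set D := -c - ℓh bML with hD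
    have hhbML : ℓh bML ≤ -c := by
      have h := isMaxOn_iff.mp (halfloglik_max X) bML (Set.mem_univ bML)
      rw [loglik_zero _ X] at h
      exact h
    have hD0 : 0 ≤ D := by rw [hD]; linarith
    set C2 := -(ℓh bML) with hC2
    have hC20 : 0 ≤ C2 := by rw [hC2]; linarith
    -- key inequalities for each α
    have hkey : ∀ α ∈ Set.Ioo (0:ℝ) 1,
        ℓh bML ≤ ℓh (bhat α) ∧ (1/2 ≤ α → ℓy bML - 2*(1-α)*D ≤ ℓy (bhat α)) := by
      intro α hα
      have h0 := isMaxOn_iff.mp (hbhat α hα) bML (Set.mem_univ bML)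
      rw [loglik_decomp y X α bML, loglik_decomp y X α (bhat α)] at h0
      rw [← hℓy, ← hℓh] at h0
      have hML := isMaxOn_iff.mp hbML (bhat α) (Set.mem_univ (bhat α))
      have hupA : ℓh (bhat α) ≤ -c := by
        have h := isMaxOn_iff.mp (halfloglik_max X) (bhat α) (Set.mem_univ (bhat α))
        rw [loglik_zero _ X] at h
        exact h
      constructor
      · nlinarith [hα.1, hα.2]
      · intro hα2
        rw [hD]
        nlinarith [hα.1, hα.2]
    have hbound : ∀ᶠ α in nhdsWithin (1:ℝ) (Set.Ioo 0 1), ‖bhat α‖ ≤ ‖G'‖ * (2*C2) := by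
      filter_upwards [hmem] with α hα
      apply hnormbound _ _ (by positivity)
      intro j
      have h1 := (hkey α hα).1
      exact coord_bound X (bhat α) (by rw [← hℓh, hC2]; simpa using h1) j
    have hval : Filter.Tendsto (fun α => ℓy (bhat α)) (nhdsWithin (1:ℝ) (Set.Ioo 0 1))
        (nhds (ℓy bML)) := by
      apply tendsto_of_tendsto_of_tendsto_of_le_of_le'
        (g := fun α : ℝ => ℓy bML - 2*(1-α)*D) (h := fun _ : ℝ => ℓy bML)
      · have h : Filter.Tendsto (fun α : ℝ => ℓy bML - 2*(1-α)*D) (nhds 1) (nhds (ℓy bML)) :=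
          (continuous_const.sub ((continuous_const.mul
            (continuous_const.sub continuous_id)).mul continuous_const)).tendsto' 1 (ℓy bML)
            (by simp; rfl)
        exact h.mono_left nhdsWithin_le_nhds
      · exact tendsto_const_nhds
      · filter_upwards [hmem, hbig] with α hα hα2
        exact (hkey α hα).2 hα2
      · filter_upwards with α
        exact isMaxOn_iff.mp hbML (bhat α) (Set.mem_univ (bhat α))
    exact tendsto_of_maxish (loglik_continuous _ X) hbML
      (fun b' h => maxOn_unique _ X hX h hbML) hbound hval
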